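/- Let m ≥ 2 and p ∈ (0,1), q = 1 − p. Consider m i.i.d. infinite binary strings with i.i.d. Bernoulli(p) bits, and let t' be a fixed binary tree with m leaves in which no leaf has a parent of outdegree 1. Then the probability that the trie built from the m strings equals t' is m! · q^{LPL(t')} · p^{RPL(t')}, where LPL(t') and RPL(t') are the sums over leaves of t' of their left and right depths respectively. -/

import Mathlib

/-- Binary trees: `leaf` denotes the empty tree, so a node may have 0, 1 or 2 children. -/
inductive BTree where
  | leaf : BTree
  | node : BTree → BTree → BTree
deriving DecidableEq

/-- Number of leaves (nodes of outdegree 0). -/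
def BTree.leaves : BTree → ℕ
  | .leaf => 0
  | .node .leaf .leaf => 1
  | .node l r => l.leaves + r.leaves

/-- Left external path length: the sum over the leaves of the number of
left steps on the path from the root. -/
def BTree.LPL : BTree → ℕ
  | .leaf => 0
  | .node l r => l.LPL + l.leaves + r.LPL

/-- Right external path length: the sum over the leaves of the number of
right steps on the path from the root. -/
def BTree.RPL : BTree → ℕ
  | .leaf => 0
  | .node l r => l.RPL + r.RPL + r.leaves

/-- No leaf has a parent of outdegree 1. -/
def BTree.NoLonelyLeaf : BTree → Prop
  | .leaf => True
  | .node .leaf .leaf => True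
  | .node l .leaf => l ≠ .node .leaf .leaf ∧ l.NoLonelyLeaf
  | .node .leaf r => r ≠ .node .leaf .leaf ∧ r.NoLonelyLeaf
  | .node l r => l.NoLonelyLeaf ∧ r.NoLonelyLeaf

/-- `IsTrie strs T`: `T` is the trie built from the list of infinite binary strings
`strs` (0 = left, 1 = right): a set of `≥ 2` strings is split by its first bit and
the subtries are built recursively from the tails; a single string gives a leaf. -/
inductive IsTrie : List (ℕ → Bool) → BTree → Prop where
  | nil : IsTrie [] .leaf
  | single (s : ℕ → Bool) : IsTrie [s] (.node .leaf .leaf)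
  | branch (strs : List (ℕ → Bool)) (l r : BTree) (h : 2 ≤ strs.length)
      (hl : IsTrie ((strs.filter fun s => s 0 = false).map fun s n => s (n + 1)) l)
      (hr : IsTrie ((strs.filter fun s => s 0 = true).map fun s n => s (n + 1)) r) :
      IsTrie strs (.node l r)

def Matches (s : ℕ → Bool) (w : List Bool) : Prop := ∀ n < w.length, s n = w.getD n false

def BTree.leafWords : BTree → List (List Bool)
  | .leaf => []
  | .node .leaf .leaf => [[]]
  | .node l r => (l.leafWords.map (List.cons false)) ++ (r.leafWords.map (List.cons true))

lemma lw_length (t : BTree) : t.leafWords.length = t.leaves := by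
  induction t with
  | leaf => simp [BTree.leafWords, BTree.leaves]
  | node l r ihl ihr =>
    cases l <;> cases r <;> simp_all [BTree.leafWords, BTree.leaves]

lemma matches_nil (s : ℕ → Bool) : Matches s [] := by intro n hn; simp at hn

lemma matches_cons (s : ℕ → Bool) (b : Bool) (w : List Bool) :
    Matches s (b :: w) ↔ s 0 = b ∧ Matches (fun n => s (n + 1)) w := by
  constructor
  · intro h
    refine ⟨h 0 (by simp), fun n hn => ?_⟩
    have := h (n + 1) (by simpa using Nat.succ_lt_succ hn)
    simpa using this
  · rintro ⟨h0, h1⟩ n hn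
    cases n with
    | zero => simpa using h0
    | succ k => exact h1 k (by simpa using Nat.lt_of_succ_lt_succ hn)

lemma matches_prefix (s : ℕ → Bool) (w₁ w₂ : List Bool) (h₁ : Matches s w₁)
    (h₂ : Matches s w₂) (hlen : w₁.length ≤ w₂.length) : w₁ <+: w₂ := by
  rw [List.prefix_iff_eq_take]
  apply List.ext_getElem (by simpa using hlen)
  intro n hn hn'
  have e1 := h₁ n hn
  have e2 := h₂ n (lt_of_lt_of_le hn hlen)
  rw [List.getD_eq_getElem _ _ hn] at e1
  rw [List.getD_eq_getElem _ _ (lt_of_lt_of_le hn hlen)] at e2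
  rw [← e1, e2]; simp [List.getElem_take]


lemma lw_node {l r : BTree} (h : ¬(l = .leaf ∧ r = .leaf)) :
    (BTree.node l r).leafWords
      = (l.leafWords.map (List.cons false)) ++ (r.leafWords.map (List.cons true)) := by
  cases l <;> cases r <;> simp_all [BTree.leafWords]

lemma nll_node {l r : BTree} (h : (BTree.node l r).NoLonelyLeaf) :
    l.NoLonelyLeaf ∧ r.NoLonelyLeaf := by
  cases l <;> cases r <;> simp_all [BTree.NoLonelyLeaf]

lemma nll_leaves (t : BTree) (h : t.NoLonelyLeaf) :
    (t ≠ .leaf → 1 ≤ t.leaves) ∧ (t ≠ .leaf → t ≠ .node .leaf .leaf → 2 ≤ t.leaves) := by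
  induction t with
  | leaf => simp
  | node l r ihl ihr =>
    cases l with
    | leaf =>
      cases r with
      | leaf => simp [BTree.leaves]
      | node a b =>
        simp only [BTree.NoLonelyLeaf] at h
        have h2 := (ihr h.2).2 (by simp) h.1
        refine ⟨fun _ => ?_, fun _ _ => ?_⟩ <;> simp [BTree.leaves] <;> omega
    | node a b =>
      cases r with
      | leaf =>
        simp only [BTree.NoLonelyLeaf] at h
        have h2 := (ihl h.2).2 (by simp) h.1
        refine ⟨fun _ => ?_, fun _ _ => ?_⟩ <;> simp [BTree.leaves] <;> omega
      | node c d =>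
        simp only [BTree.NoLonelyLeaf] at h
        have h1 := (ihl h.1).1 (by simp)
        have h2 := (ihr h.2).1 (by simp)
        refine ⟨fun _ => ?_, fun _ _ => ?_⟩ <;> simp [BTree.leaves] <;> omega

lemma sum_map_add {α : Type*} (l : List α) (f g : α → ℕ) :
    (l.map fun x => f x + g x).sum = (l.map f).sum + (l.map g).sum := by
  induction l with
  | nil => simp
  | cons a l ih => simp [ih]; omega

lemma lw_count_false (t : BTree) : (t.leafWords.map (List.count false)).sum = t.LPL := by
  induction t with
  | leaf => simp [BTree.leafWords, BTree.LPL]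
  | node l r ihl ihr =>
    by_cases hb : l = .leaf ∧ r = .leaf
    · obtain ⟨rfl, rfl⟩ := hb
      simp [BTree.leafWords, BTree.LPL, BTree.leaves]
    · rw [lw_node hb]
      simp only [List.map_append, List.sum_append, List.map_map]
      have e1 : (List.count false ∘ List.cons false) = fun w : List Bool => List.count false w + 1 := by
        funext w; simp [List.count_cons]
      have e2 : (List.count false ∘ List.cons true) = fun w : List Bool => List.count false w := by
        funext w; simp [List.count_cons]
      rw [e1, e2, sum_map_add]
      simp only [List.map_const', List.sum_replicate, smul_eq_mul, mul_one]
      show _ + (_ : ℕ) + _ = (BTree.node l r).LPL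
      rw [BTree.LPL, ihl, ihr, lw_length]

lemma lw_count_true (t : BTree) : (t.leafWords.map (List.count true)).sum = t.RPL := by
  induction t with
  | leaf => simp [BTree.leafWords, BTree.RPL]
  | node l r ihl ihr =>
    by_cases hb : l = .leaf ∧ r = .leaf
    · obtain ⟨rfl, rfl⟩ := hb
      simp [BTree.leafWords, BTree.RPL, BTree.leaves]
    · rw [lw_node hb]
      simp only [List.map_append, List.sum_append, List.map_map]
      have e1 : (List.count true ∘ List.cons true) = fun w : List Bool => List.count true w + 1 := by
        funext w; simp [List.count_cons]
      have e2 : (List.count true ∘ List.cons false) = fun w : List Bool => List.count true w := by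
        funext w; simp [List.count_cons]
      rw [e1, e2, sum_map_add]
      simp only [List.map_const', List.sum_replicate, smul_eq_mul, mul_one]
      show _ + ((_ : ℕ) + _) = (BTree.node l r).RPL
      rw [BTree.RPL, ihl, ihr, lw_length]
      omega

def PF (a b : List Bool) : Prop := ¬ a <+: b ∧ ¬ b <+: a

lemma lw_pairwise (t : BTree) : t.leafWords.Pairwise PF := by
  induction t with
  | leaf => simp [BTree.leafWords]
  | node l r ihl ihr =>
    by_cases hb : l = .leaf ∧ r = .leaf
    · obtain ⟨rfl, rfl⟩ := hb; simp [BTree.leafWords]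
    · rw [lw_node hb, List.pairwise_append]
      refine ⟨?_, ?_, ?_⟩
      · rw [List.pairwise_map]
        exact ihl.imp fun h => ⟨fun hp => h.1 (List.cons_prefix_cons.mp hp).2,
          fun hp => h.2 (List.cons_prefix_cons.mp hp).2⟩
      · rw [List.pairwise_map]
        exact ihr.imp fun h => ⟨fun hp => h.1 (List.cons_prefix_cons.mp hp).2,
          fun hp => h.2 (List.cons_prefix_cons.mp hp).2⟩
      · intro a ha b hbm
        simp only [List.mem_map] at ha hbm
        obtain ⟨a', _, rfl⟩ := ha; obtain ⟨b', _, rfl⟩ := hbm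
        constructor <;> intro hp <;> simpa using (List.cons_prefix_cons.mp hp).1

lemma lw_nodup (t : BTree) : t.leafWords.Nodup :=
  (lw_pairwise t).imp fun h => by rintro rfl; exact h.1 List.prefix_rfl

lemma lw_prefix_eq (t : BTree) {a b : List Bool} (ha : a ∈ t.leafWords)
    (hb : b ∈ t.leafWords) (h : a <+: b) : a = b := by
  by_contra hne
  haveI : Std.Symm PF := ⟨fun x y h => ⟨h.2, h.1⟩⟩
  exact ((lw_pairwise t).forall ha hb hne).1 h

lemma forall2_imp_mem {α β : Type*} {R S : α → β → Prop} : ∀ {l₁ : List α} {l₂ : List β},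
    List.Forall₂ R l₁ l₂ → (∀ a ∈ l₁, ∀ b ∈ l₂, R a b → S a b) → List.Forall₂ S l₁ l₂ := by
  intro l₁ l₂ h
  induction h with
  | nil => intro _; exact .nil
  | @cons a b l₁ l₂ h₁ h₂ ih =>
    intro hs
    exact .cons (hs a (by simp) b (by simp) h₁)
      (ih fun x hx y hy hr => hs x (by simp [hx]) y (by simp [hy]) hr)

lemma forall2_filter {α β : Type*} {R : α → β → Prop} (p : α → Bool) (q : β → Bool) :
    ∀ {l₁ : List α} {l₂ : List β}, List.Forall₂ R l₁ l₂ →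
      (∀ a ∈ l₁, ∀ b ∈ l₂, R a b → p a = q b) →
      List.Forall₂ R (l₁.filter p) (l₂.filter q) := by
  intro l₁ l₂ h
  induction h with
  | nil => intro _; simp only [List.filter_nil]; exact .nil
  | @cons a b l₁ l₂ h₁ h₂ ih =>
    intro hpq
    have ih' := ih fun x hx y hy hr => hpq x (by simp [hx]) y (by simp [hy]) hr
    rw [List.filter_cons, List.filter_cons, ← hpq a (by simp) b (by simp) h₁]
    cases hpa : p a
    · simpa using ih'
    · simpa using List.Forall₂.cons h₁ ih'

lemma interleave {α β : Type*} {R : α → β → Prop} (p : α → Bool) :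
    ∀ (strs : List α) (a b : List β), List.Forall₂ R (strs.filter p) a →
      List.Forall₂ R (strs.filter fun x => !p x) b →
      ∃ ws, List.Forall₂ R strs ws ∧ ws.Perm (a ++ b) := by
  intro strs
  induction strs with
  | nil =>
    intro a b ha hb
    simp only [List.filter_nil] at ha hb
    cases ha; cases hb
    exact ⟨[], .nil, by simp⟩
  | cons s strs ih =>
    intro a b ha hb
    cases hps : p s
    · rw [List.filter_cons_of_neg (by simp [hps])] at ha
      rw [List.filter_cons_of_pos (by simp [hps])] at hb
      cases hb with
      | cons h₁ h₂ =>
        obtain ⟨ws, hws, hperm⟩ := ih _ _ ha h₂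
        exact ⟨_ :: ws, .cons h₁ hws, (hperm.cons _).trans List.perm_middle.symm⟩
    · rw [List.filter_cons_of_pos (by simp [hps])] at ha
      rw [List.filter_cons_of_neg (by simp [hps])] at hb
      cases ha with
      | cons h₁ h₂ =>
        obtain ⟨ws, hws, hperm⟩ := ih _ _ h₂ hb
        exact ⟨_ :: ws, .cons h₁ hws, hperm.cons _⟩

lemma isTrie_leaf {strs : List (ℕ → Bool)} (h : IsTrie strs .leaf) : strs = [] := by
  cases h; rfl

lemma hfun_aux : (fun s : ℕ → Bool => decide (s 0 = true)) = (fun s => !decide (s 0 = false)) := by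
  funext s; cases hs : s 0 <;> simp [hs]

lemma isTrie_iff (t : BTree) (ht : t.NoLonelyLeaf) (strs : List (ℕ → Bool)) :
    IsTrie strs t ↔ ∃ ws, List.Forall₂ Matches strs ws ∧ ws.Perm t.leafWords := by
  induction t generalizing strs with
  | leaf =>
    simp only [BTree.leafWords]
    constructor
    · intro h; cases h; exact ⟨[], .nil, .nil⟩
    · rintro ⟨ws, hm, hperm⟩
      rw [List.perm_nil] at hperm; subst hperm
      cases hm; exact .nil
  | node l r ihl ihr =>
    by_cases hb : l = .leaf ∧ r = .leaf
    · obtain ⟨rfl, rfl⟩ := hb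
      simp only [BTree.leafWords]
      constructor
      · intro h
        cases h with
        | single s => exact ⟨[[]], .cons (matches_nil s) .nil, List.Perm.refl _⟩
        | branch _ _ _ hlen hl hr =>
          exfalso
          have el : (strs.filter fun s => decide (s 0 = false)) = [] := by
            simpa using isTrie_leaf hl
          have er : (strs.filter fun s => decide (s 0 = true)) = [] := by
            simpa using isTrie_leaf hr
          rw [hfun_aux] at er
          have := List.length_eq_length_filter_add (l := strs) (fun s => decide (s 0 = false))
          rw [el, er] at this
          simp only [List.length_nil] at this
          omega
      · rintro ⟨ws, hm, hperm⟩
        rw [List.perm_singleton] at hperm; subst hperm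
        cases hm with
        | cons h₁ h₂ => cases h₂; exact .single _
    · have hlw := lw_node hb
      obtain ⟨hnl, hnr⟩ := nll_node ht
      have hne2 : (BTree.node l r) ≠ BTree.node .leaf .leaf := by
        intro hc; injection hc with e1 e2; exact hb ⟨e1, e2⟩
      have hlen2 : 2 ≤ (BTree.node l r).leaves := (nll_leaves _ ht).2 (by simp) hne2
      constructor
      · intro h
        cases h with
        | single s => exact absurd ⟨rfl, rfl⟩ hb
        | branch _ _ _ hlen hl hr =>
          obtain ⟨wsl, hml, hpl⟩ := (ihl hnl _).mp hl
          obtain ⟨wsr, hmr, hpr⟩ := (ihr hnr _).mp hr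
          have hml' : List.Forall₂ Matches (strs.filter fun s => decide (s 0 = false))
              (wsl.map (List.cons false)) := by
            rw [List.forall₂_map_right_iff]
            refine forall2_imp_mem (List.forall₂_map_left_iff.mp hml) ?_
            intro a ha w _ hr2
            rw [matches_cons]
            exact ⟨by simpa using List.of_mem_filter ha, hr2⟩
          have hmr' : List.Forall₂ Matches (strs.filter fun s => decide (s 0 = true))
              (wsr.map (List.cons true)) := by
            rw [List.forall₂_map_right_iff]
            refine forall2_imp_mem (List.forall₂_map_left_iff.mp hmr) ?_
            intro a ha w _ hr2
            rw [matches_cons]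
            exact ⟨by simpa using List.of_mem_filter ha, hr2⟩
          rw [hfun_aux] at hmr'
          obtain ⟨ws, hws, hperm⟩ := interleave _ strs _ _ hml' hmr'
          exact ⟨ws, hws, hperm.trans (by rw [hlw]; exact (hpl.map _).append (hpr.map _))⟩
      · rintro ⟨ws, hm, hperm⟩
        have hlen : 2 ≤ strs.length := by
          have e1 := hm.length_eq
          have e2 := hperm.length_eq
          rw [lw_length] at e2
          omega
        have hmem : ∀ w ∈ ws, w ∈ (l.leafWords.map (List.cons false))
            ++ (r.leafWords.map (List.cons true)) := by
          intro w hw; rw [← hlw]; exact hperm.subset hw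
        have hkey : ∀ (bit : Bool), List.Forall₂ Matches
            ((strs.filter fun s => decide (s 0 = bit)).map fun s n => s (n + 1))
            ((ws.filter fun w => decide (w.headI = bit)).map List.tail) := by
          intro bit
          have hfil := forall2_filter (fun s => decide (s 0 = bit))
            (fun w => decide (w.headI = bit)) hm ?_
          · rw [List.forall₂_map_left_iff, List.forall₂_map_right_iff]
            refine forall2_imp_mem hfil ?_
            intro a _ w hw hr2
            have hwm := hmem w (List.mem_of_mem_filter hw)
            simp only [List.mem_append, List.mem_map] at hwm
            obtain (⟨w', _, rfl⟩ | ⟨w', _, rfl⟩) := hwm <;>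
              · exact ((matches_cons a _ w').mp hr2).2
          · intro a _ w hw hr2
            have hwm := hmem w hw
            simp only [List.mem_append, List.mem_map] at hwm
            obtain (⟨w', _, rfl⟩ | ⟨w', _, rfl⟩) := hwm <;>
              · have := ((matches_cons a _ w').mp hr2).1
                simp [this]
        have hperm' : ∀ (bit : Bool) (tside : BTree), (tside.leafWords.map (List.cons bit)).filter
              (fun w => decide (w.headI = bit)) = tside.leafWords.map (List.cons bit) := by
          intro bit tside
          apply List.filter_eq_self.mpr
          intro w hw
          simp only [List.mem_map] at hw
          obtain ⟨w', _, rfl⟩ := hw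
          simp
        have hperm'' : ∀ (bit : Bool) (tside : BTree), (tside.leafWords.map (List.cons (!bit))).filter
              (fun w => decide (w.headI = bit)) = [] := by
          intro bit tside
          apply List.filter_eq_nil_iff.mpr
          intro w hw
          simp only [List.mem_map] at hw
          obtain ⟨w', _, rfl⟩ := hw
          cases bit <;> simp
        refine IsTrie.branch _ _ _ hlen ((ihl hnl _).mpr ?_) ((ihr hnr _).mpr ?_)
        · refine ⟨(ws.filter fun w => decide (w.headI = false)).map List.tail, hkey false, ?_⟩
          have hp2 := (hperm.filter (fun w => decide (w.headI = false))).map List.tail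
          rw [hlw, List.filter_append, hperm' false l] at hp2
          have := hperm'' false r
          simp only [Bool.not_false] at this
          rw [this, List.append_nil, List.map_map] at hp2
          simpa [Function.comp_def] using hp2
        · refine ⟨(ws.filter fun w => decide (w.headI = true)).map List.tail, hkey true, ?_⟩
          have hp2 := (hperm.filter (fun w => decide (w.headI = true))).map List.tail
          rw [hlw, List.filter_append, hperm' true r] at hp2
          have := hperm'' true l
          simp only [Bool.not_true] at this
          rw [this, List.nil_append, List.map_map] at hp2
          simpa [Function.comp_def] using hp2

lemma word_prod (p : ℝ) (w : List Bool) :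
    (∏ n ∈ Finset.range w.length, if w.getD n false then p else 1-p)
      = p ^ (w.count true) * (1-p) ^ (w.count false) := by
  induction w with
  | nil => simp
  | cons b w ih =>
    rw [List.length_cons, Finset.prod_range_succ']
    simp only [List.getD_cons_succ, List.getD_cons_zero]
    rw [ih]
    cases b <;> simp [List.count_cons, pow_succ] <;> ring

lemma sum_getD_eq {α : Type*} (g : α → ℕ) (d : α) (l : List α) :
    ∑ n ∈ Finset.range l.length, g (l.getD n d) = (l.map g).sum := by
  induction l with
  | nil => simp
  | cons a l ih =>
    rw [List.length_cons, Finset.sum_range_succ']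
    simp only [List.getD_cons_succ, List.getD_cons_zero, ih, List.map_cons, List.sum_cons]
    omega

lemma prod_S (m : ℕ) (p : ℝ) (ws : List (List Bool)) (hlen : ws.length = m) :
    (∏ x ∈ (Finset.univ : Finset (Fin m)).biUnion
        (fun i => (Finset.range ((ws.getD (i : ℕ) []).length)).image (fun n => (i, n))),
      if (ws.getD (x.1 : ℕ) []).getD x.2 false then p else 1-p)
      = p ^ ((ws.map (List.count true)).sum) * (1-p) ^ ((ws.map (List.count false)).sum) := by
  subst hlen
  rw [Finset.prod_biUnion]
  · have key : ∀ i : Fin ws.length,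
        (∏ x ∈ (Finset.range ((ws.getD (i : ℕ) []).length)).image (fun n => (i, n)),
          if (ws.getD (x.1 : ℕ) []).getD x.2 false then p else 1-p)
        = p ^ ((ws.getD (i : ℕ) []).count true) * (1-p) ^ ((ws.getD (i : ℕ) []).count false) := by
      intro i
      rw [Finset.prod_image (by intro a _ b _ h; simpa using h)]
      simpa using word_prod p (ws.getD (i : ℕ) [])
    rw [Finset.prod_congr rfl (fun i _ => key i), Finset.prod_mul_distrib,
      Finset.prod_pow_eq_pow_sum, Finset.prod_pow_eq_pow_sum]
    rw [show (∑ i : Fin ws.length, List.count true (ws.getD (i : ℕ) []))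
        = ∑ n ∈ Finset.range ws.length, List.count true (ws.getD n []) from
        Fin.sum_univ_eq_sum_range (fun n => List.count true (ws.getD n [])) ws.length,
      show (∑ i : Fin ws.length, List.count false (ws.getD (i : ℕ) []))
        = ∑ n ∈ Finset.range ws.length, List.count false (ws.getD n []) from
        Fin.sum_univ_eq_sum_range (fun n => List.count false (ws.getD n [])) ws.length, sum_getD_eq, sum_getD_eq]
  · intro i _ j _ hij
    simp only [Function.onFun]
    rw [Finset.disjoint_left]
    rintro ⟨a, b⟩ h1 h2
    simp only [Finset.mem_image, Finset.mem_range] at h1 h2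
    obtain ⟨n, _, e1⟩ := h1
    obtain ⟨n', _, e2⟩ := h2
    apply hij
    rw [Prod.mk.injEq] at e1 e2
    rw [e1.1, e2.1]

lemma forall2_ofFn {m : ℕ} (ω : Fin m → ℕ → Bool) (ws : List (List Bool)) (hlen : ws.length = m) :
    List.Forall₂ Matches (List.ofFn ω) ws ↔ ∀ i : Fin m, Matches (ω i) (ws.getD (i : ℕ) []) := by
  rw [List.forall₂_iff_get]
  constructor
  · rintro ⟨h1, h2⟩ i
    have h3 := h2 i.1 (by simpa using i.2) (by simpa [hlen] using i.2)
    rw [List.get_ofFn] at h3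
    rw [List.getD_eq_getElem _ _ (by simpa [hlen] using i.2)]
    simpa using h3
  · intro h
    refine ⟨by simp [hlen], fun i h₁ h₂ => ?_⟩
    have h3 := h ⟨i, by simpa using h₁⟩
    rw [List.getD_eq_getElem _ _ (by simpa [hlen] using h₂)] at h3
    rw [List.get_ofFn]
    simpa using h3

lemma meas_cyl {m : ℕ} (S : Finset (Fin m × ℕ)) (f : Fin m × ℕ → Bool) :
    MeasurableSet {ω : Fin m → ℕ → Bool | ∀ x ∈ S, ω x.1 x.2 = f x} := by
  have e : {ω : Fin m → ℕ → Bool | ∀ x ∈ S, ω x.1 x.2 = f x}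
      = ⋂ x ∈ (S : Set (Fin m × ℕ)), {ω : Fin m → ℕ → Bool | ω x.1 x.2 = f x} := by
    ext ω; simp
  rw [e]
  refine MeasurableSet.biInter (S : Set (Fin m × ℕ)).to_countable fun x _ => ?_
  show MeasurableSet ((fun ω : Fin m → ℕ → Bool => ω x.1 x.2) ⁻¹' {f x})
  exact ((measurable_pi_apply x.2).comp (measurable_pi_apply x.1))
    (measurableSet_singleton (f x))

/-- Let `m ≥ 2`, `p ∈ (0,1)` and consider `m` i.i.d. infinite binary strings with i.i.d.
Bernoulli(p) bits (a probability measure `μ` on `Fin m → ℕ → Bool` whose finite-dimensional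
cylinder probabilities are the Bernoulli products). If `t'` is a fixed binary tree with `m`
leaves in which no leaf has a parent of outdegree 1, then the probability that the trie
built from the `m` strings equals `t'` is `m! · q^{LPL(t')} · p^{RPL(t')}`, `q = 1 - p`. -/
theorem stmt_17 (m : ℕ) (hm : 2 ≤ m) (p : ℝ) (hp : 0 < p) (hp1 : p < 1)
    (μ : MeasureTheory.Measure (Fin m → ℕ → Bool)) [MeasureTheory.IsProbabilityMeasure μ]
    (hμ : ∀ (S : Finset (Fin m × ℕ)) (f : Fin m × ℕ → Bool),
      μ {ω | ∀ x ∈ S, ω x.1 x.2 = f x}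
        = ENNReal.ofReal (∏ x ∈ S, if f x then p else 1 - p))
    (t' : BTree) (hleaves : t'.leaves = m) (hgood : t'.NoLonelyLeaf) :
    (μ {ω | IsTrie (List.ofFn ω) t'}).toReal
      = (Nat.factorial m : ℝ) * (1 - p) ^ t'.LPL * p ^ t'.RPL := by
  classical
  set lw := t'.leafWords with hlwdef
  have hlwlen : lw.length = m := by rw [hlwdef, lw_length, hleaves]
  set A : List (List Bool) → Set (Fin m → ℕ → Bool) :=
    fun ws => {ω | List.Forall₂ Matches (List.ofFn ω) ws} with hAdef
  have hE : {ω : Fin m → ℕ → Bool | IsTrie (List.ofFn ω) t'}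
      = ⋃ ws ∈ lw.permutations.toFinset, A ws := by
    ext ω
    simp only [Set.mem_setOf_eq, Set.mem_iUnion, List.mem_toFinset, List.mem_permutations, hAdef]
    rw [isTrie_iff t' hgood]
    constructor
    · rintro ⟨ws, h1, h2⟩; exact ⟨ws, h2, h1⟩
    · rintro ⟨ws, h2, h1⟩; exact ⟨ws, h1, h2⟩
  have hws_basic : ∀ ws ∈ lw.permutations.toFinset, ws.length = m := fun ws hws => by
    rw [(List.mem_permutations.mp (List.mem_toFinset.mp hws)).length_eq, hlwlen]
  have hcyl : ∀ ws, ws.length = m → A ws =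
      {ω | ∀ x ∈ (Finset.univ : Finset (Fin m)).biUnion
          (fun i => (Finset.range ((ws.getD (i : ℕ) []).length)).image (fun n => (i, n))),
        ω x.1 x.2 = (ws.getD (x.1 : ℕ) []).getD x.2 false} := by
    intro ws hlen
    ext ω
    simp only [hAdef, Set.mem_setOf_eq]
    rw [forall2_ofFn ω ws hlen]
    constructor
    · intro h x hx
      simp only [Finset.mem_biUnion, Finset.mem_image, Finset.mem_range, Finset.mem_univ,
        true_and] at hx
      obtain ⟨i, n, hn, rfl⟩ := hx
      exact h i n hn
    · intro h i n hn
      exact h (i, n) (by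
        simp only [Finset.mem_biUnion, Finset.mem_image, Finset.mem_range, Finset.mem_univ,
          true_and]
        exact ⟨i, n, hn, rfl⟩)
  have hmeas : ∀ ws ∈ lw.permutations.toFinset, MeasurableSet (A ws) := by
    intro ws hws
    rw [hcyl ws (hws_basic ws hws)]
    exact meas_cyl _ _
  have hval : ∀ ws ∈ lw.permutations.toFinset,
      μ (A ws) = ENNReal.ofReal (p ^ t'.RPL * (1 - p) ^ t'.LPL) := by
    intro ws hws
    have hlen := hws_basic ws hws
    have hperm := List.mem_permutations.mp (List.mem_toFinset.mp hws)
    rw [hcyl ws hlen, hμ, prod_S m p ws hlen]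
    have e1 : ((ws.map (List.count true)).sum) = t'.RPL := by
      rw [(hperm.map (List.count true)).sum_eq, lw_count_true]
    have e2 : ((ws.map (List.count false)).sum) = t'.LPL := by
      rw [(hperm.map (List.count false)).sum_eq, lw_count_false]
    rw [e1, e2]
  have hdisj : (↑lw.permutations.toFinset : Set (List (List Bool))).PairwiseDisjoint A := by
    intro ws hws ws' hws' hne
    have hlen := hws_basic ws (Finset.mem_coe.mp hws)
    have hlen' := hws_basic ws' (Finset.mem_coe.mp hws')
    have hpm := List.mem_permutations.mp (List.mem_toFinset.mp (Finset.mem_coe.mp hws))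
    have hpm' := List.mem_permutations.mp (List.mem_toFinset.mp (Finset.mem_coe.mp hws'))
    simp only [Function.onFun]
    rw [Set.disjoint_left]
    intro ω hω hω'
    apply hne
    have h1 := (forall2_ofFn ω ws hlen).mp hω
    have h2 := (forall2_ofFn ω ws' hlen').mp hω'
    apply List.ext_getElem (by rw [hlen, hlen'])
    intro n hn hn'
    have hi : n < m := by omega
    have m1 := h1 ⟨n, hi⟩
    have m2 := h2 ⟨n, hi⟩
    rw [List.getD_eq_getElem _ _ (by simpa [hlen] using hi)] at m1
    rw [List.getD_eq_getElem _ _ (by simpa [hlen'] using hi)] at m2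
    have w1mem : ws[n] ∈ lw := hpm.subset (List.getElem_mem hn)
    have w2mem : ws'[n] ∈ lw := hpm'.subset (List.getElem_mem hn')
    rcases le_total (ws[n]).length (ws'[n]).length with hle | hle
    · exact lw_prefix_eq t' w1mem w2mem (matches_prefix _ _ _ m1 m2 hle)
    · exact (lw_prefix_eq t' w2mem w1mem (matches_prefix _ _ _ m2 m1 hle)).symm
  rw [hE, MeasureTheory.measure_biUnion_finset hdisj hmeas,
    Finset.sum_congr rfl hval, Finset.sum_const]
  have hcard : lw.permutations.toFinset.card = Nat.factorial m := by
    rw [List.toFinset_card_of_nodup (List.nodup_permutations lw (lw_nodup t')),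
      List.length_permutations, hlwlen]
  rw [hcard, nsmul_eq_mul]
  have hc0 : 0 ≤ p ^ t'.RPL * (1 - p) ^ t'.LPL := by
    have : 0 ≤ 1 - p := by linarith
    positivity
  rw [ENNReal.toReal_mul, ENNReal.toReal_ofReal hc0, ENNReal.toReal_natCast]
  ring
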